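/- In the hint-interval model with v_t ≡ 1 for all t, there is a universal constant c > 0 (independent of T and L) such that for every horizon T ≥ 1, every L ∈ [1, T], every q ∈ [1, ∞), and every policy π, there exists an admissible (possibly random) sequence {m_t, h_t, σ_t} with E[|h_t − m_t|^q] ≤ σ_t^q for all t and Σ_{t=1}^T σ_t ≤ L such that Reg(π) ≥ c·√(T^{1/(q+1)} · L^{q/(q+1)}). -/

import Mathlib

noncomputable section

/-- Reward of bidding `b` in a first-price auction with private value `v` and
others' highest bid `m`: the bidder wins iff `b ≥ m`, paying her bid. -/
def reward (v b m : ℝ) : ℝ := if m ≤ b then v - b else 0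

/-- The oracle class `F`: nondecreasing 1-Lipschitz functions from `[0,1]` to `[0,1]`. -/
def IsOracle (a : ℝ → ℝ) : Prop :=
  MonotoneOn a (Set.Icc 0 1) ∧ LipschitzOnWith 1 a (Set.Icc 0 1) ∧
    Set.MapsTo a (Set.Icc 0 1) (Set.Icc 0 1)

/-- An environment for `T` rounds of repeated first-price auctions: a probability
space carrying the (jointly random) others' highest bids `m t` and hints `h t`,
together with deterministic private values `v t` and hint accuracies `σ t`. -/
structure Env (T : ℕ) where
  Ω : Type
  [ms : MeasurableSpace Ω]
  μ : MeasureTheory.Measure Ω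
  prob : MeasureTheory.IsProbabilityMeasure μ
  v : Fin T → ℝ
  m : Fin T → Ω → ℝ
  h : Fin T → Ω → ℝ
  σ : Fin T → ℝ
  v_mem : ∀ t, v t ∈ Set.Icc (0 : ℝ) 1
  m_mem : ∀ t ω, m t ω ∈ Set.Icc (0 : ℝ) 1
  h_mem : ∀ t ω, h t ω ∈ Set.Icc (0 : ℝ) 1
  σ_mem : ∀ t, σ t ∈ Set.Icc (0 : ℝ) 1
  m_meas : ∀ t, Measurable (m t)
  h_meas : ∀ t, Measurable (h t)

/-- A randomized bidding policy in the hint-interval model: at round `t` the bid may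
depend on the private values `v_1,…,v_t`, the hints `h_1,…,h_t`, the accuracies
`σ_1,…,σ_t`, the past highest bids `m_1,…,m_{t−1}`, and internal randomness `ω`. -/
structure Policy (T : ℕ) where
  Ω : Type
  [ms : MeasurableSpace Ω]
  μ : MeasureTheory.Measure Ω
  prob : MeasureTheory.IsProbabilityMeasure μ
  bid : Fin T → (Fin T → ℝ) → (Fin T → ℝ) → (Fin T → ℝ) → (Fin T → ℝ) → Ω → ℝ
  bid_mem : ∀ t v h σ m ω, bid t v h σ m ω ∈ Set.Icc (0 : ℝ) 1
  bid_meas : ∀ t v h σ m, Measurable fun ω => bid t v h σ m ω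
  adapted : ∀ (t : Fin T) (v v' h h' σ σ' m m' : Fin T → ℝ) (ω : Ω),
    (∀ s, s ≤ t → v s = v' s) → (∀ s, s ≤ t → h s = h' s) → (∀ s, s ≤ t → σ s = σ' s) →
    (∀ s, s < t → m s = m' s) →
    bid t v h σ m ω = bid t v' h' σ' m' ω

open MeasureTheory

/-- The admissibility condition `E[|h_t − m_t|^q] ≤ σ_t^q` for every round `t`. -/
def Admissible {T : ℕ} (env : Env T) (q : ℝ) : Prop :=
  letI := env.ms
  ∀ t, (∫ ω, |env.h t ω - env.m t ω| ^ q ∂env.μ) ≤ (env.σ t) ^ q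

/-- Expected cumulative reward of a policy in a given environment (expectation over
both the environment randomness and the policy's internal randomness). -/
def policyGain {T : ℕ} (π : Policy T) (env : Env T) : ℝ :=
  letI := env.ms
  letI := π.ms
  ∑ t : Fin T, ∫ ω : env.Ω × π.Ω,
    reward (env.v t)
      (π.bid t env.v (fun s => env.h s ω.1) env.σ (fun s => env.m s ω.1) ω.2)
      (env.m t ω.1) ∂(env.μ.prod π.μ)

/-- Expected cumulative reward of an oracle `a : [0,1] → [0,1]`. -/
def oracleGain {T : ℕ} (a : ℝ → ℝ) (env : Env T) : ℝ :=
  letI := env.ms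
  ∑ t : Fin T, ∫ ω, reward (env.v t) (a (env.v t)) (env.m t ω) ∂env.μ

/-- Regret of a policy: best oracle cumulative expected reward minus the policy's
cumulative expected reward. -/
def Regret {T : ℕ} (π : Policy T) (env : Env T) : ℝ :=
  (⨆ a : {a : ℝ → ℝ // IsOracle a}, oracleGain a.1 env) - policyGain π env


namespace Thm1Aux

open MeasureTheory Finset Function

variable {T : ℕ}

/-- product Bernoulli weight -/
def w (θ : ℝ) (x : Fin T → Bool) : ℝ := ∏ t, (if x t then θ else 1 - θ)

lemma sum_pi_bool (f : Fin T → Bool → ℝ) :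
    ∑ x : Fin T → Bool, ∏ t, f t (x t) = ∏ t, (f t true + f t false) := by
  classical
  rw [← Fintype.piFinset_univ, ← Finset.prod_univ_sum]
  exact Finset.prod_congr rfl fun t _ => by
    rw [Fintype.sum_bool]

lemma w_nonneg {θ : ℝ} (hθ0 : 0 ≤ θ) (hθ1 : θ ≤ 1) (x : Fin T → Bool) : 0 ≤ w θ x :=
  Finset.prod_nonneg fun t _ => by by_cases h : x t <;> simp [h] <;> linarith

lemma sum_w (θ : ℝ) : ∑ x : Fin T → Bool, w θ x = 1 := by
  have h := sum_pi_bool (T := T) (fun _ b => if b then θ else 1 - θ)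
  simpa [w] using h

lemma cond_step (θ : ℝ) (t : Fin T) (F G : (Fin T → Bool) → ℝ)
    (hF : ∀ x b, F (Function.update x t b) = F x)
    (hG : ∀ x b, G (Function.update x t b) = G x) :
    ∑ x : Fin T → Bool, w θ x * (if x t then F x else G x)
      = ∑ x : Fin T → Bool, w θ x * (θ * F x + (1 - θ) * G x) := by
  classical
  have key : ∑ x : Fin T → Bool,
      (w θ x * (if x t then F x else G x) - w θ x * (θ * F x + (1 - θ) * G x)) = 0 := by
    apply Finset.sum_ninvolution (g := fun x => Function.update x t (!x t))
    · intro x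
      have hR : (∏ s ∈ Finset.univ.erase t,
            (if (Function.update x t (!x t)) s then θ else 1-θ))
          = ∏ s ∈ Finset.univ.erase t, (if x s then θ else 1-θ) :=
        Finset.prod_congr rfl fun s hs => by
          rw [Function.update_of_ne (Finset.ne_of_mem_erase hs)]
      have hw : ∀ y : Fin T → Bool, w θ y
          = (if y t then θ else 1-θ) * ∏ s ∈ Finset.univ.erase t, (if y s then θ else 1-θ) :=
        fun y => (Finset.mul_prod_erase Finset.univ _ (Finset.mem_univ t)).symm
      rw [hw x, hw (Function.update x t (!x t)), hR, hF x (!x t), hG x (!x t),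
        Function.update_self]
      cases hxt : x t <;> simp [hxt] <;> ring
    · intro x _ heq
      have := congrFun heq t
      simp at this
    · intro x; exact Finset.mem_univ _
    · intro x
      simp [Function.update_idem, Function.update_self, Bool.not_not, Function.update_eq_self]
  rw [Finset.sum_sub_distrib] at key
  linarith

lemma sum_w_ite (θ : ℝ) (t : Fin T) (c₁ c₀ : ℝ) :
    ∑ x : Fin T → Bool, w θ x * (if x t then c₁ else c₀) = θ * c₁ + (1 - θ) * c₀ := by
  rw [cond_step θ t (fun _ => c₁) (fun _ => c₀) (fun _ _ => rfl) (fun _ _ => rfl),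
    ← Finset.sum_mul, sum_w, one_mul]

-- elementary sqrt lemmas
lemma sqrt_lb {a ε : ℝ} (ha : 0 < a) (hε0 : 0 ≤ ε) (hεa : ε ≤ a) :
    a - ε^2/a ≤ Real.sqrt (a^2 - ε^2) := by
  have hu0 : 0 ≤ ε^2/a := div_nonneg (sq_nonneg ε) ha.le
  have hua : ε^2/a ≤ a := by
    rw [div_le_iff₀ ha]
    nlinarith
  have hmul : ε^2/a * a = ε^2 := div_mul_cancel₀ _ ha.ne'
  rw [Real.le_sqrt (by linarith) (by nlinarith)]
  nlinarith

lemma sqrt_ab {a b : ℝ} (ha : 0 ≤ a) (hb : 0 ≤ b) : Real.sqrt (a*b) ≤ (a+b)/2 := by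
  rw [show (a+b)/2 = Real.sqrt (((a+b)/2)^2) from (Real.sqrt_sq (by linarith)).symm]
  exact Real.sqrt_le_sqrt (by nlinarith [sq_nonneg (a-b)])

lemma one_sub_pow_le {r : ℝ} (h0 : 0 ≤ r) (h1 : r ≤ 1) (n : ℕ) :
    1 - r^n ≤ n*(1-r) := by
  induction n with
  | zero => simp
  | succ n ih =>
    have hrn : r^n ≤ 1 := pow_le_one₀ h0 h1
    have : r^(n+1) = r^n * r := by ring
    push_cast
    nlinarith

lemma max_zero_eq (z : ℝ) : max z 0 = (z + |z|)/2 := by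
  rcases abs_cases z with ⟨h1, h2⟩ | ⟨h1, h2⟩
  · rw [max_eq_left h2, h1]; ring
  · rw [max_eq_right h2.le, h1]; ring

/-- The key total-variation bound between the two product Bernoulli weights. -/
lemma tv_half {Δ η : ℝ} (hΔ0 : 0 < Δ) (hΔ18 : Δ ≤ 1/8) (hη0 : 0 ≤ η) (hηΔ : η ≤ Δ)
    (hTη : (T:ℝ) * η^2 ≤ Δ/12) :
    ∑ x : Fin T → Bool, max (w (2*Δ+η) x - w (2*Δ-η) x) 0 ≤ 1/2 := by
  classical
  set θp := 2*Δ+η with hθp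
  set θm := 2*Δ-η with hθm
  have hθp0 : 0 ≤ θp := by simp [hθp]; linarith
  have hθp1 : θp ≤ 1 := by simp [hθp]; linarith
  have hθm0 : 0 ≤ θm := by simp [hθm]; linarith
  have hθm1 : θm ≤ 1 := by simp [hθm]; linarith
  clear_value θp θm
  set a : (Fin T → Bool) → ℝ := fun x => ∏ t, Real.sqrt (if x t then θp else 1-θp) with hadef
  set b : (Fin T → Bool) → ℝ := fun x => ∏ t, Real.sqrt (if x t then θm else 1-θm) with hbdef
  have ha0 : ∀ x, 0 ≤ a x := fun x => Finset.prod_nonneg fun t _ => Real.sqrt_nonneg _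
  have hb0 : ∀ x, 0 ≤ b x := fun x => Finset.prod_nonneg fun t _ => Real.sqrt_nonneg _
  have ha2 : ∀ x, a x ^ 2 = w θp x := by
    intro x
    rw [hadef]
    simp only
    rw [← Finset.prod_pow]
    exact Finset.prod_congr rfl fun t _ => Real.sq_sqrt (by by_cases h : x t <;> simp [h] <;> linarith)
  have hb2 : ∀ x, b x ^ 2 = w θm x := by
    intro x
    rw [hbdef]
    simp only
    rw [← Finset.prod_pow]
    exact Finset.prod_congr rfl fun t _ => Real.sq_sqrt (by by_cases h : x t <;> simp [h] <;> linarith)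
  set r : ℝ := Real.sqrt (θp*θm) + Real.sqrt ((1-θp)*(1-θm)) with hrdef
  set ρ : ℝ := ∑ x : Fin T → Bool, a x * b x with hρdef
  clear_value r ρ
  have hρ : ρ = r^T := by
    rw [hρdef]
    have hab : ∀ x : Fin T → Bool, a x * b x
        = ∏ t, Real.sqrt ((if x t then θp else 1-θp) * (if x t then θm else 1-θm)) := by
      intro x
      rw [hadef, hbdef]
      simp only
      rw [← Finset.prod_mul_distrib]
      exact Finset.prod_congr rfl fun t _ =>
        (Real.sqrt_mul (by by_cases h : x t <;> simp [h] <;> linarith) _).symm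
    simp only [hab]
    have := sum_pi_bool (T := T)
      (fun _ c => Real.sqrt ((if c then θp else 1-θp) * (if c then θm else 1-θm)))
    rw [this]
    simp [hrdef, Finset.prod_const]
  have hr0 : 0 ≤ r := by rw [hrdef]; positivity
  have hr1 : r ≤ 1 := by
    have h2 := sqrt_ab hθp0 hθm0
    have h3 := sqrt_ab (by linarith : (0:ℝ) ≤ 1-θp) (by linarith : (0:ℝ) ≤ 1-θm)
    rw [hrdef]
    linarith
  have hρ0 : 0 ≤ ρ := hρ ▸ pow_nonneg hr0 T
  have hρ1 : ρ ≤ 1 := hρ ▸ pow_le_one₀ hr0 hr1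
  -- lower bound on r
  have hrlb : 1 - (η^2/(2*Δ) + (4/3)*η^2) ≤ r := by
    have e1 : θp * θm = (2*Δ)^2 - η^2 := by rw [hθp, hθm]; ring
    have e2 : (1-θp) * (1-θm) = (1-2*Δ)^2 - η^2 := by rw [hθp, hθm]; ring
    have l1 : 2*Δ - η^2/(2*Δ) ≤ Real.sqrt (θp*θm) := by
      rw [e1]; exact sqrt_lb (by linarith) hη0 (by linarith)
    have l2 : (1-2*Δ) - η^2/(1-2*Δ) ≤ Real.sqrt ((1-θp)*(1-θm)) := by
      rw [e2]; exact sqrt_lb (by linarith) hη0 (by linarith)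
    have l3 : η^2/(1-2*Δ) ≤ (4/3)*η^2 := by
      rw [div_le_iff₀ (by linarith)]
      nlinarith [sq_nonneg η]
    rw [hrdef]
    linarith
  have hρlb : 1 - ρ ≤ 1/9 := by
    have h1 : 1 - ρ ≤ (T:ℝ)*(1-r) := hρ ▸ one_sub_pow_le hr0 hr1 T
    have h2 : (T:ℝ)*(1-r) ≤ (T:ℝ)*(η^2/(2*Δ) + (4/3)*η^2) := by
      apply mul_le_mul_of_nonneg_left (by linarith) (Nat.cast_nonneg T)
    have h3 : (T:ℝ)*(η^2/(2*Δ) + (4/3)*η^2) = ((T:ℝ)*η^2)/(2*Δ) + (4/3)*((T:ℝ)*η^2) := by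
      ring
    have h45 : ((T:ℝ)*η^2)/(2*Δ) ≤ 1/24 := by
      rw [div_le_iff₀ (by linarith)]
      linarith
    have h6 : (4/3)*((T:ℝ)*η^2) ≤ (4/3)*(Δ/12) := by linarith
    have h7 : (4/3)*(Δ/12) ≤ 1/72 := by linarith
    linarith
  -- Cauchy-Schwarz
  set D0 : ℝ := ∑ x : Fin T → Bool, |w θp x - w θm x| with hD0def
  clear_value D0
  have hCS := Finset.sum_mul_sq_le_sq_mul_sq Finset.univ
    (fun x : Fin T → Bool => |a x - b x|) (fun x => a x + b x)
  have habs : ∀ x : Fin T → Bool, |w θp x - w θm x| = |a x - b x| * (a x + b x) := by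
    intro x
    rw [← ha2, ← hb2]
    rw [show a x ^2 - b x ^2 = (a x - b x) * (a x + b x) from by ring, abs_mul]
    rw [abs_of_nonneg (show 0 ≤ a x + b x by have := ha0 x; have := hb0 x; linarith)]
  have hsub : ∑ x : Fin T → Bool, |a x - b x|^2 = 2 - 2*ρ := by
    have : ∀ x : Fin T → Bool, |a x - b x|^2 = w θp x + w θm x - 2*(a x * b x) := by
      intro x
      rw [sq_abs, ← ha2, ← hb2]
      ring
    simp only [this]
    rw [Finset.sum_sub_distrib, Finset.sum_add_distrib, sum_w, sum_w, ← Finset.mul_sum, ← hρdef]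
    ring
  have hadd : ∑ x : Fin T → Bool, (a x + b x)^2 = 2 + 2*ρ := by
    have : ∀ x : Fin T → Bool, (a x + b x)^2 = w θp x + w θm x + 2*(a x * b x) := by
      intro x
      rw [← ha2, ← hb2]
      ring
    simp only [this]
    rw [Finset.sum_add_distrib, Finset.sum_add_distrib, sum_w, sum_w, ← Finset.mul_sum, ← hρdef]
    ring
  have hD0sq : D0^2 ≤ (2-2*ρ)*(2+2*ρ) := by
    rw [hD0def]
    simp only [habs]
    calc (∑ x : Fin T → Bool, |a x - b x| * (a x + b x))^2
        ≤ (∑ x : Fin T → Bool, |a x - b x|^2) * ∑ x : Fin T → Bool, (a x + b x)^2 := hCS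
      _ = (2-2*ρ)*(2+2*ρ) := by rw [hsub, hadd]
  have hD00 : 0 ≤ D0 := by
    rw [hD0def]
    exact Finset.sum_nonneg fun x _ => abs_nonneg _
  have hD01 : D0 ≤ 1 := by nlinarith
  -- conclude
  have hdiffsum : ∑ x : Fin T → Bool, (w θp x - w θm x) = 0 := by
    rw [Finset.sum_sub_distrib, sum_w, sum_w]
    ring
  have : ∑ x : Fin T → Bool, max (w θp x - w θm x) 0
      = (∑ x : Fin T → Bool, (w θp x - w θm x) + D0)/2 := by
    rw [hD0def, ← Finset.sum_add_distrib, Finset.sum_div]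
    exact Finset.sum_congr rfl fun x _ => max_zero_eq _
  rw [this, hdiffsum]
  linarith

/-- The product Bernoulli probability measure on `Fin T → Bool`. -/
noncomputable def bern (T : ℕ) (θ : ℝ) : Measure (Fin T → Bool) :=
  ∑ x : Fin T → Bool, (ENNReal.ofReal (w θ x)) • MeasureTheory.Measure.dirac x

lemma isFinite_smul_dirac (r : ℝ) (x : Fin T → Bool) :
    IsFiniteMeasure ((ENNReal.ofReal r) • MeasureTheory.Measure.dirac x) := by
  constructor
  rw [MeasureTheory.Measure.smul_apply, smul_eq_mul]
  exact ENNReal.mul_lt_top ENNReal.ofReal_lt_top (by simp)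

lemma integral_bern {θ : ℝ} (hθ0 : 0 ≤ θ) (hθ1 : θ ≤ 1) (g : (Fin T → Bool) → ℝ) :
    ∫ x, g x ∂(bern T θ) = ∑ x : Fin T → Bool, w θ x * g x := by
  rw [bern, MeasureTheory.integral_finset_sum_measure (fun x _ => ?_)]
  · refine Finset.sum_congr rfl fun x _ => ?_
    rw [MeasureTheory.integral_smul_measure, MeasureTheory.integral_dirac, smul_eq_mul,
      ENNReal.toReal_ofReal (w_nonneg hθ0 hθ1 x)]
  · haveI := isFinite_smul_dirac (T := T) (w θ x) x
    exact MeasureTheory.Integrable.of_finite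

lemma prob_bern {θ : ℝ} (hθ0 : 0 ≤ θ) (hθ1 : θ ≤ 1) :
    IsProbabilityMeasure (bern T θ) := by
  constructor
  rw [bern, MeasureTheory.Measure.finset_sum_apply]
  have : ∀ x : Fin T → Bool,
      ((ENNReal.ofReal (w θ x)) • MeasureTheory.Measure.dirac x) Set.univ
        = ENNReal.ofReal (w θ x) := by
    intro x
    rw [MeasureTheory.Measure.smul_apply, smul_eq_mul]
    simp
  simp only [this]
  rw [← ENNReal.ofReal_sum_of_nonneg (fun x _ => w_nonneg hθ0 hθ1 x), sum_w]
  simp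

section MainConstruction

variable (T : ℕ)

/-- The common environment skeleton: `v ≡ 1`, `h ≡ 1/2`, constant accuracy `s`,
and `m_t = 1/2 + Δ·x_t` under the product Bernoulli(θ) measure. -/
def mkEnv (Δ θ s : ℝ) (hΔ0 : 0 ≤ Δ) (hΔ1 : Δ ≤ 1/8)
    (hθ0 : 0 ≤ θ) (hθ1 : θ ≤ 1) (hs0 : 0 ≤ s) (hs1 : s ≤ 1) : Env T where
  Ω := Fin T → Bool
  ms := inferInstance
  μ := bern T θ
  prob := prob_bern hθ0 hθ1
  v := fun _ => 1
  m := fun t x => if x t then 1/2 + Δ else 1/2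
  h := fun _ _ => 1/2
  σ := fun _ => s
  v_mem := fun _ => by constructor <;> norm_num
  m_mem := fun t x => by
    show (if x t = true then 1/2 + Δ else (1/2:ℝ)) ∈ Set.Icc (0:ℝ) 1
    split_ifs with h
    · exact ⟨by linarith, by linarith⟩
    · exact ⟨by norm_num, by norm_num⟩
  h_mem := fun _ _ => by constructor <;> norm_num
  σ_mem := fun _ => ⟨hs0, hs1⟩
  m_meas := fun _ => Measurable.of_discrete
  h_meas := fun _ => measurable_const

variable (π : Policy T)

/-- The bid of policy `π` at round `t`, as a function of the environment sample. -/
def pbid (Δ s : ℝ) (t : Fin T) (x : Fin T → Bool) (ω₂ : π.Ω) : ℝ :=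
  π.bid t (fun _ => 1) (fun _ => 1/2) (fun _ => s) (fun u => if x u then 1/2 + Δ else 1/2) ω₂

/-- Indicator that the policy's bid is at least `1/2 + Δ`. -/
def Zf (Δ s : ℝ) (t : Fin T) (x : Fin T → Bool) (ω₂ : π.Ω) : ℝ :=
  if 1/2 + Δ ≤ pbid T π Δ s t x ω₂ then 1 else 0

/-- Expected indicator of the policy overbidding at round `t`, weights `θ`. -/
noncomputable def zeta (Δ s θ : ℝ) (t : Fin T) : ℝ :=
  letI := π.ms
  ∫ ω₂, (∑ x : Fin T → Bool, w θ x * Zf T π Δ s t x ω₂) ∂π.μ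

lemma pbid_mem (Δ s : ℝ) (t : Fin T) (x : Fin T → Bool) (ω₂ : π.Ω) :
    pbid T π Δ s t x ω₂ ∈ Set.Icc (0:ℝ) 1 := π.bid_mem _ _ _ _ _ _

lemma pbid_meas (Δ s : ℝ) (t : Fin T) (x : Fin T → Bool) :
    letI := π.ms
    Measurable (fun ω₂ => pbid T π Δ s t x ω₂) := π.bid_meas _ _ _ _ _

lemma pbid_update (Δ s : ℝ) (t : Fin T) (x : Fin T → Bool) (b : Bool) (ω₂ : π.Ω) :
    pbid T π Δ s t (Function.update x t b) ω₂ = pbid T π Δ s t x ω₂ := by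
  apply π.adapted t _ _ _ _ _ _ _ _ ω₂ (fun _ _ => rfl) (fun _ _ => rfl) (fun _ _ => rfl)
  intro u hu
  rw [Function.update_of_ne (ne_of_lt hu)]

lemma reward_meas (mv : ℝ) : Measurable (fun b : ℝ => reward 1 b mv) := by
  unfold reward
  exact Measurable.ite (measurableSet_le measurable_const measurable_id)
    (measurable_const.sub measurable_id) measurable_const

lemma reward_le_one {b mv : ℝ} (hb : b ∈ Set.Icc (0:ℝ) 1) : reward 1 b mv ≤ 1 := by
  unfold reward
  obtain ⟨hb0, hb1⟩ := hb
  split <;> linarith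

lemma reward_nonneg {b mv : ℝ} (hb : b ∈ Set.Icc (0:ℝ) 1) : 0 ≤ reward 1 b mv := by
  unfold reward
  obtain ⟨hb0, hb1⟩ := hb
  split <;> linarith

lemma Zf_meas (Δ s : ℝ) (t : Fin T) (x : Fin T → Bool) :
    letI := π.ms
    Measurable (fun ω₂ => Zf T π Δ s t x ω₂) := by
  letI := π.ms
  unfold Zf
  exact Measurable.ite (measurableSet_le measurable_const (pbid_meas T π Δ s t x))
    measurable_const measurable_const

/-- Integrability of the inner sum against the policy randomness. -/
lemma zeta_integrable (Δ s θ : ℝ) (hθ0 : 0 ≤ θ) (hθ1 : θ ≤ 1) (t : Fin T) :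
    letI := π.ms
    Integrable (fun ω₂ => ∑ x : Fin T → Bool, w θ x * Zf T π Δ s t x ω₂) π.μ := by
  letI := π.ms
  haveI := π.prob
  apply MeasureTheory.Integrable.mono' (integrable_const (1:ℝ))
  · exact (Finset.measurable_sum _ fun x _ =>
      (measurable_const.mul (Zf_meas T π Δ s t x))).aestronglyMeasurable
  · apply Filter.Eventually.of_forall
    intro ω₂
    rw [Real.norm_eq_abs, abs_of_nonneg]
    · calc ∑ x : Fin T → Bool, w θ x * Zf T π Δ s t x ω₂
          ≤ ∑ x : Fin T → Bool, w θ x * 1 := by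
            apply Finset.sum_le_sum
            intro x _
            apply mul_le_mul_of_nonneg_left _ (w_nonneg hθ0 hθ1 x)
            unfold Zf; split <;> norm_num
        _ = 1 := by rw [← Finset.sum_mul, sum_w, one_mul]
    · apply Finset.sum_nonneg
      intro x _
      apply mul_nonneg (w_nonneg hθ0 hθ1 x)
      unfold Zf; split <;> norm_num

lemma zeta_nonneg (Δ s θ : ℝ) (hθ0 : 0 ≤ θ) (hθ1 : θ ≤ 1) (t : Fin T) :
    0 ≤ zeta T π Δ s θ t := by
  letI := π.ms
  unfold zeta
  apply integral_nonneg
  intro ω₂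
  apply Finset.sum_nonneg
  intro x _
  apply mul_nonneg (w_nonneg hθ0 hθ1 x)
  unfold Zf; split <;> norm_num

lemma zeta_le_one (Δ s θ : ℝ) (hθ0 : 0 ≤ θ) (hθ1 : θ ≤ 1) (t : Fin T) :
    zeta T π Δ s θ t ≤ 1 := by
  letI := π.ms
  haveI := π.prob
  unfold zeta
  calc ∫ ω₂, (∑ x : Fin T → Bool, w θ x * Zf T π Δ s t x ω₂) ∂π.μ
      ≤ ∫ _ω₂, (1:ℝ) ∂π.μ := by
        apply integral_mono (zeta_integrable T π Δ s θ hθ0 hθ1 t) (integrable_const _)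
        intro ω₂
        calc ∑ x : Fin T → Bool, w θ x * Zf T π Δ s t x ω₂
            ≤ ∑ x : Fin T → Bool, w θ x * 1 := by
              apply Finset.sum_le_sum
              intro x _
              apply mul_le_mul_of_nonneg_left _ (w_nonneg hθ0 hθ1 x)
              unfold Zf; split <;> norm_num
          _ = 1 := by rw [← Finset.sum_mul, sum_w, one_mul]
    _ = 1 := by simp

end MainConstruction

section Bounds

variable (T : ℕ) (π : Policy T)

/-- Key per-round bound on the policy's expected gain. -/
lemma policyGain_bound (Δ s θ : ℝ) (hΔ0 : 0 < Δ) (hΔ18 : Δ ≤ 1/8)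
    (hθ0 : 0 ≤ θ) (hθ1 : θ ≤ 1) (hs0 : 0 ≤ s) (hs1 : s ≤ 1) :
    policyGain π (mkEnv T Δ θ s hΔ0.le hΔ18 hθ0 hθ1 hs0 hs1)
      ≤ ∑ t : Fin T, ((1/2 - Δ - (1-θ)/2) * zeta T π Δ s θ t + (1-θ)/2) := by
  letI := π.ms
  haveI := π.prob
  haveI : IsProbabilityMeasure (bern T θ) := prob_bern hθ0 hθ1
  have henv : policyGain π (mkEnv T Δ θ s hΔ0.le hΔ18 hθ0 hθ1 hs0 hs1)
      = ∑ t : Fin T, ∫ ω : (Fin T → Bool) × π.Ω,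
          reward 1 (pbid T π Δ s t ω.1 ω.2) (if ω.1 t then 1/2 + Δ else 1/2)
          ∂((bern T θ).prod π.μ) := rfl
  rw [henv]
  apply Finset.sum_le_sum
  intro t _
  set c : ℝ := 1/2 - Δ - (1-θ)/2 with hc
  -- measurability and integrability
  have hmeas : Measurable (fun ω : (Fin T → Bool) × π.Ω =>
      reward 1 (pbid T π Δ s t ω.1 ω.2) (if ω.1 t then 1/2 + Δ else 1/2)) := by
    have hg : Measurable (fun p : π.Ω × (Fin T → Bool) =>
        reward 1 (pbid T π Δ s t p.2 p.1) (if p.2 t then 1/2 + Δ else 1/2)) :=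
      measurable_from_prod_countable_left fun x => by
        have := (reward_meas (if x t then 1/2 + Δ else (1/2:ℝ))).comp (pbid_meas T π Δ s t x)
        exact this
    exact hg.comp measurable_swap
  have hbd : ∀ (x : Fin T → Bool) (ω₂ : π.Ω) (mv : ℝ),
      ‖reward 1 (pbid T π Δ s t x ω₂) mv‖ ≤ 1 := by
    intro x ω₂ mv
    rw [Real.norm_eq_abs, abs_of_nonneg (reward_nonneg (pbid_mem T π Δ s t x ω₂))]
    exact reward_le_one (pbid_mem T π Δ s t x ω₂)
  have hintf : Integrable (fun ω : (Fin T → Bool) × π.Ω =>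
      reward 1 (pbid T π Δ s t ω.1 ω.2) (if ω.1 t then 1/2 + Δ else 1/2))
      ((bern T θ).prod π.μ) := by
    apply MeasureTheory.Integrable.mono' (integrable_const (1:ℝ)) hmeas.aestronglyMeasurable
    exact Filter.Eventually.of_forall fun ω => hbd ω.1 ω.2 _
  have hinner_int : ∀ x : Fin T → Bool, Integrable
      (fun ω₂ => reward 1 (pbid T π Δ s t x ω₂) (if x t then 1/2 + Δ else 1/2)) π.μ := by
    intro x
    apply MeasureTheory.Integrable.mono' (integrable_const (1:ℝ))
      (((reward_meas _).comp (pbid_meas T π Δ s t x)).aestronglyMeasurable)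
    exact Filter.Eventually.of_forall fun ω₂ => hbd x ω₂ _
  rw [MeasureTheory.integral_prod _ hintf, integral_bern hθ0 hθ1]
  calc ∑ x : Fin T → Bool, w θ x * ∫ ω₂,
          reward 1 (pbid T π Δ s t x ω₂) (if x t then 1/2 + Δ else 1/2) ∂π.μ
      = ∫ ω₂, (∑ x : Fin T → Bool, w θ x *
          reward 1 (pbid T π Δ s t x ω₂) (if x t then 1/2 + Δ else 1/2)) ∂π.μ := by
        rw [MeasureTheory.integral_finset_sum _
          (fun x _ => ((hinner_int x).const_mul (w θ x)))]
        exact Finset.sum_congr rfl fun x _ => (integral_const_mul _ _).symm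
    _ ≤ ∫ ω₂, (c * (∑ x : Fin T → Bool, w θ x * Zf T π Δ s t x ω₂) + (1-θ)/2) ∂π.μ := by
        apply integral_mono
        · exact integrable_finset_sum _ (fun x _ => ((hinner_int x).const_mul (w θ x)))
        · exact ((zeta_integrable T π Δ s θ hθ0 hθ1 t).const_mul c).add (integrable_const _)
        intro ω₂
        dsimp only
        have h1 : ∑ x : Fin T → Bool, w θ x *
            reward 1 (pbid T π Δ s t x ω₂) (if x t then 1/2 + Δ else 1/2)
            = ∑ x : Fin T → Bool, w θ x *
              (if x t then reward 1 (pbid T π Δ s t x ω₂) (1/2 + Δ)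
                else reward 1 (pbid T π Δ s t x ω₂) (1/2)) := by
          refine Finset.sum_congr rfl fun x _ => ?_
          by_cases h : x t <;> simp [h]
        have h2 : c * (∑ x : Fin T → Bool, w θ x * Zf T π Δ s t x ω₂) + (1-θ)/2
            = ∑ x : Fin T → Bool, w θ x * (c * Zf T π Δ s t x ω₂ + (1-θ)/2) := by
          simp only [mul_add]
          rw [Finset.sum_add_distrib, ← Finset.sum_mul, sum_w, one_mul, Finset.mul_sum]
          congr 1
          exact Finset.sum_congr rfl fun x _ => by ring
        rw [h1, h2, cond_step θ t
          (fun x => reward 1 (pbid T π Δ s t x ω₂) (1/2 + Δ))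
          (fun x => reward 1 (pbid T π Δ s t x ω₂) (1/2))
          (fun x b => by simp only [pbid_update]) (fun x b => by simp only [pbid_update])]
        apply Finset.sum_le_sum
        intro x _
        apply mul_le_mul_of_nonneg_left _ (w_nonneg hθ0 hθ1 x)
        obtain ⟨hB0, hB1⟩ := pbid_mem T π Δ s t x ω₂
        unfold reward Zf
        by_cases hh1 : 1/2 + Δ ≤ pbid T π Δ s t x ω₂
        · have hh2 : (1:ℝ)/2 ≤ pbid T π Δ s t x ω₂ := by linarith
          rw [if_pos hh1, if_pos hh2, if_pos hh1, hc]
          nlinarith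
        · by_cases hh2 : (1:ℝ)/2 ≤ pbid T π Δ s t x ω₂
          · rw [if_neg hh1, if_pos hh2, if_neg hh1, hc]
            nlinarith
          · rw [if_neg hh1, if_neg hh2, if_neg hh1, hc]
            nlinarith
    _ = c * zeta T π Δ s θ t + (1-θ)/2 := by
        rw [MeasureTheory.integral_add
          ((zeta_integrable T π Δ s θ hθ0 hθ1 t).const_mul c) (integrable_const _),
          integral_const_mul, integral_const]
        unfold zeta
        simp

/-- Constant functions in `[0,1]` are oracles. -/
lemma isOracle_const {c : ℝ} (hc : c ∈ Set.Icc (0:ℝ) 1) : IsOracle (fun _ => c) := by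
  refine ⟨fun _ _ _ _ _ => le_refl c, fun x _ y _ => ?_, fun x _ => hc⟩
  simp

lemma oracleGain_const (Δ s θ : ℝ) (hΔ0 : 0 ≤ Δ) (hΔ18 : Δ ≤ 1/8)
    (hθ0 : 0 ≤ θ) (hθ1 : θ ≤ 1) (hs0 : 0 ≤ s) (hs1 : s ≤ 1) (cb : ℝ) :
    oracleGain (fun _ => cb) (mkEnv T Δ θ s hΔ0 hΔ18 hθ0 hθ1 hs0 hs1)
      = (T : ℝ) * (θ * reward 1 cb (1/2 + Δ) + (1-θ) * reward 1 cb (1/2)) := by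
  have henv : oracleGain (fun _ => cb) (mkEnv T Δ θ s hΔ0 hΔ18 hθ0 hθ1 hs0 hs1)
      = ∑ t : Fin T, ∫ x : Fin T → Bool,
          reward 1 cb (if x t then 1/2 + Δ else 1/2) ∂(bern T θ) := rfl
  rw [henv]
  have hval : ∀ t : Fin T, (∫ x : Fin T → Bool,
      reward 1 cb (if x t then 1/2 + Δ else 1/2) ∂(bern T θ))
      = θ * reward 1 cb (1/2 + Δ) + (1-θ) * reward 1 cb (1/2) := by
    intro t
    rw [integral_bern hθ0 hθ1]
    have h1 : ∀ x : Fin T → Bool, reward 1 cb (if x t then 1/2 + Δ else 1/2)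
        = if x t then reward 1 cb (1/2 + Δ) else reward 1 cb (1/2) := fun x => by
      by_cases h : x t <;> simp [h]
    simp only [h1]
    exact sum_w_ite θ t _ _
  simp only [hval]
  rw [Finset.sum_const, Finset.card_univ, Fintype.card_fin, nsmul_eq_mul]

lemma oracleGain_le (Δ s θ : ℝ) (hΔ0 : 0 ≤ Δ) (hΔ18 : Δ ≤ 1/8)
    (hθ0 : 0 ≤ θ) (hθ1 : θ ≤ 1) (hs0 : 0 ≤ s) (hs1 : s ≤ 1)
    (a : ℝ → ℝ) (ha : IsOracle a) :
    oracleGain a (mkEnv T Δ θ s hΔ0 hΔ18 hθ0 hθ1 hs0 hs1) ≤ (T : ℝ) := by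
  have ha1 : a 1 ∈ Set.Icc (0:ℝ) 1 := ha.2.2 ⟨by norm_num, le_refl 1⟩
  have henv : oracleGain a (mkEnv T Δ θ s hΔ0 hΔ18 hθ0 hθ1 hs0 hs1)
      = ∑ t : Fin T, ∫ x : Fin T → Bool,
          reward 1 (a 1) (if x t then 1/2 + Δ else 1/2) ∂(bern T θ) := rfl
  rw [henv]
  calc ∑ t : Fin T, ∫ x : Fin T → Bool,
        reward 1 (a 1) (if x t then 1/2 + Δ else 1/2) ∂(bern T θ)
      ≤ ∑ _t : Fin T, (1:ℝ) := by
        apply Finset.sum_le_sum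
        intro t _
        rw [integral_bern hθ0 hθ1]
        calc ∑ x : Fin T → Bool, w θ x * reward 1 (a 1) (if x t then 1/2 + Δ else 1/2)
            ≤ ∑ x : Fin T → Bool, w θ x * 1 := by
              apply Finset.sum_le_sum
              intro x _
              exact mul_le_mul_of_nonneg_left (reward_le_one ha1) (w_nonneg hθ0 hθ1 x)
          _ = 1 := by rw [← Finset.sum_mul, sum_w, one_mul]
    _ = (T:ℝ) := by
        rw [Finset.sum_const, Finset.card_univ, Fintype.card_fin, nsmul_eq_mul, mul_one]

lemma regret_ge (Δ s θ : ℝ) (hΔ0 : 0 ≤ Δ) (hΔ18 : Δ ≤ 1/8)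
    (hθ0 : 0 ≤ θ) (hθ1 : θ ≤ 1) (hs0 : 0 ≤ s) (hs1 : s ≤ 1)
    (a : ℝ → ℝ) (ha : IsOracle a) :
    oracleGain a (mkEnv T Δ θ s hΔ0 hΔ18 hθ0 hθ1 hs0 hs1)
      - policyGain π (mkEnv T Δ θ s hΔ0 hΔ18 hθ0 hθ1 hs0 hs1)
      ≤ Regret π (mkEnv T Δ θ s hΔ0 hΔ18 hθ0 hθ1 hs0 hs1) := by
  unfold Regret
  apply sub_le_sub_right
  have hbdd : BddAbove (Set.range fun a : {a : ℝ → ℝ // IsOracle a} =>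
      oracleGain a.1 (mkEnv T Δ θ s hΔ0 hΔ18 hθ0 hθ1 hs0 hs1)) := by
    refine ⟨(T:ℝ), ?_⟩
    rintro y ⟨a', rfl⟩
    exact oracleGain_le T Δ s θ hΔ0 hΔ18 hθ0 hθ1 hs0 hs1 a'.1 a'.2
  exact le_ciSup hbdd (⟨a, ha⟩ : {a : ℝ → ℝ // IsOracle a})

lemma admissible_mkEnv (Δ s θ q : ℝ) (hΔ0 : 0 < Δ) (hΔ18 : Δ ≤ 1/8)
    (hθ0 : 0 ≤ θ) (hθ1 : θ ≤ 1) (hs0 : 0 ≤ s) (hs1 : s ≤ 1) (hq : 0 < q)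
    (hadm : θ * Δ ^ q ≤ s ^ q) :
    Admissible (mkEnv T Δ θ s hΔ0.le hΔ18 hθ0 hθ1 hs0 hs1) q := by
  intro t
  have henv : (letI := (mkEnv T Δ θ s hΔ0.le hΔ18 hθ0 hθ1 hs0 hs1).ms
      ∫ ω, |(mkEnv T Δ θ s hΔ0.le hΔ18 hθ0 hθ1 hs0 hs1).h t ω
        - (mkEnv T Δ θ s hΔ0.le hΔ18 hθ0 hθ1 hs0 hs1).m t ω| ^ q
        ∂(mkEnv T Δ θ s hΔ0.le hΔ18 hθ0 hθ1 hs0 hs1).μ)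
      = ∫ x : Fin T → Bool, |(1:ℝ)/2 - (if x t then 1/2 + Δ else 1/2)| ^ q ∂(bern T θ) := rfl
  show _ ≤ _
  rw [henv, integral_bern hθ0 hθ1]
  have h1 : ∀ x : Fin T → Bool, |(1:ℝ)/2 - (if x t then 1/2 + Δ else 1/2)| ^ q
      = if x t then Δ ^ q else 0 := by
    intro x
    by_cases h : x t
    · rw [if_pos h, if_pos h, show (1:ℝ)/2 - (1/2 + Δ) = -Δ by ring, abs_neg,
        abs_of_nonneg hΔ0.le]
    · rw [if_neg h, if_neg h, show (1:ℝ)/2 - 1/2 = (0:ℝ) by ring, abs_zero,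
        Real.zero_rpow (ne_of_gt hq)]
  simp only [h1]
  rw [sum_w_ite θ t _ _, mul_zero, add_zero]
  exact hadm

lemma zeta_diff (Δ s η : ℝ) (hΔ0 : 0 < Δ) (hΔ18 : Δ ≤ 1/8) (hη0 : 0 ≤ η) (hηΔ : η ≤ Δ)
    (hTη : (T:ℝ) * η^2 ≤ Δ/12) (t : Fin T) :
    zeta T π Δ s (2*Δ+η) t - zeta T π Δ s (2*Δ-η) t ≤ 1/2 := by
  letI := π.ms
  haveI := π.prob
  have hθp0 : (0:ℝ) ≤ 2*Δ+η := by linarith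
  have hθp1 : 2*Δ+η ≤ 1 := by linarith
  have hθm0 : (0:ℝ) ≤ 2*Δ-η := by linarith
  have hθm1 : 2*Δ-η ≤ 1 := by linarith
  unfold zeta
  rw [← MeasureTheory.integral_sub (zeta_integrable T π Δ s _ hθp0 hθp1 t)
    (zeta_integrable T π Δ s _ hθm0 hθm1 t)]
  calc ∫ ω₂, ((∑ x : Fin T → Bool, w (2*Δ+η) x * Zf T π Δ s t x ω₂)
        - ∑ x : Fin T → Bool, w (2*Δ-η) x * Zf T π Δ s t x ω₂) ∂π.μ
      ≤ ∫ _ω₂, (1/2 : ℝ) ∂π.μ := by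
        apply integral_mono
          (MeasureTheory.Integrable.sub (zeta_integrable T π Δ s _ hθp0 hθp1 t)
            (zeta_integrable T π Δ s _ hθm0 hθm1 t)) (integrable_const _)
        intro ω₂
        have h1 : (∑ x : Fin T → Bool, w (2*Δ+η) x * Zf T π Δ s t x ω₂)
            - ∑ x : Fin T → Bool, w (2*Δ-η) x * Zf T π Δ s t x ω₂
            = ∑ x : Fin T → Bool, (w (2*Δ+η) x - w (2*Δ-η) x) * Zf T π Δ s t x ω₂ := by
          rw [← Finset.sum_sub_distrib]
          exact Finset.sum_congr rfl fun x _ => by ring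
        simp only [Pi.sub_apply]
        rw [h1]
        calc ∑ x : Fin T → Bool, (w (2*Δ+η) x - w (2*Δ-η) x) * Zf T π Δ s t x ω₂
            ≤ ∑ x : Fin T → Bool, max (w (2*Δ+η) x - w (2*Δ-η) x) 0 := by
              apply Finset.sum_le_sum
              intro x _
              have hZ0 : 0 ≤ Zf T π Δ s t x ω₂ := by unfold Zf; split <;> norm_num
              have hZ1 : Zf T π Δ s t x ω₂ ≤ 1 := by unfold Zf; split <;> norm_num
              rcases le_or_gt 0 (w (2*Δ+η) x - w (2*Δ-η) x) with hd | hd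
              · calc (w (2*Δ+η) x - w (2*Δ-η) x) * Zf T π Δ s t x ω₂
                    ≤ (w (2*Δ+η) x - w (2*Δ-η) x) * 1 := mul_le_mul_of_nonneg_left hZ1 hd
                  _ = w (2*Δ+η) x - w (2*Δ-η) x := mul_one _
                  _ ≤ max (w (2*Δ+η) x - w (2*Δ-η) x) 0 := le_max_left _ _
              · calc (w (2*Δ+η) x - w (2*Δ-η) x) * Zf T π Δ s t x ω₂
                    ≤ 0 := mul_nonpos_of_nonpos_of_nonneg hd.le hZ0
                  _ ≤ max (w (2*Δ+η) x - w (2*Δ-η) x) 0 := le_max_right _ _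
          _ ≤ 1/2 := tv_half hΔ0 hΔ18 hη0 hηΔ hTη
    _ = 1/2 := by simp

end Bounds

end Thm1Aux

open Thm1Aux

set_option maxHeartbeats 2000000



/-- **Theorem 1 (lower bound).** In the hint-interval model with `v_t ≡ 1`, there is a
universal constant `c > 0` such that for every `T ≥ 1`, `L ∈ [1,T]`, `q ∈ [1,∞)` and
every policy `π`, there is an admissible sequence with `E[|h_t − m_t|^q] ≤ σ_t^q` and
`Σ σ_t ≤ L` on which `Reg(π) ≥ c·√(T^{1/(q+1)} · L^{q/(q+1)})`. -/
theorem thm1_lower :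
    ∃ c : ℝ, 0 < c ∧
      ∀ (T : ℕ), 1 ≤ T → ∀ L q : ℝ, 1 ≤ L → L ≤ (T : ℝ) → 1 ≤ q →
        ∀ π : Policy T,
          ∃ env : Env T, env.v = (fun _ => 1) ∧ Admissible env q ∧
            (∑ t : Fin T, env.σ t) ≤ L ∧
            c * Real.sqrt ((T : ℝ) ^ (1 / (q + 1)) * L ^ (q / (q + 1))) ≤ Regret π env := by
  classical
  refine ⟨1/100, by norm_num, ?_⟩
  intro T hT L q hL1 hLT hq π
  have hTR1 : (1:ℝ) ≤ (T:ℝ) := by exact_mod_cast hT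
  have hTR0 : (0:ℝ) < (T:ℝ) := by linarith
  have hq0 : (0:ℝ) < q := by linarith
  have hq10 : (0:ℝ) < q + 1 := by linarith
  have hL0 : (0:ℝ) < L := by linarith
  have hLT0 : (0:ℝ) < L/(T:ℝ) := div_pos hL0 hTR0
  have hLT1 : L/(T:ℝ) ≤ 1 := (div_le_one hTR0).2 hLT
  have he0 : (0:ℝ) ≤ q/(q+1) := by positivity
  set D : ℝ := (L/(T:ℝ)) ^ (q/(q+1)) with hD
  have hD0 : 0 < D := Real.rpow_pos_of_pos hLT0 _
  have hD1 : D ≤ 1 := Real.rpow_le_one hLT0.le hLT1 he0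
  set Δ : ℝ := D/8 with hΔdef
  have hΔ0 : 0 < Δ := by rw [hΔdef]; positivity
  have hΔ18 : Δ ≤ 1/8 := by rw [hΔdef]; linarith
  set X : ℝ := (T:ℝ) ^ (1/(q+1)) * L ^ (q/(q+1)) with hX
  have hX1 : 1 ≤ X := by
    have h1 : (1:ℝ) ≤ (T:ℝ) ^ ((1:ℝ)/(q+1)) := Real.one_le_rpow hTR1 (by positivity)
    have h2 : (1:ℝ) ≤ L ^ (q/(q+1)) := Real.one_le_rpow hL1 he0
    nlinarith
  have hΔT : Δ * (T:ℝ) = X/8 := by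
    rw [hΔdef, hD, hX, Real.div_rpow hL0.le hTR0.le]
    have h1 : (T:ℝ) ^ ((1:ℝ)/(q+1)) = (T:ℝ) / (T:ℝ) ^ (q/(q+1)) := by
      rw [show (1:ℝ)/(q+1) = 1 - q/(q+1) by field_simp; ring, Real.rpow_sub hTR0, Real.rpow_one]
    rw [h1]
    have hTq0 : (0:ℝ) < (T:ℝ)^(q/(q+1)) := Real.rpow_pos_of_pos hTR0 _
    field_simp
  set η : ℝ := Real.sqrt (Δ/(12*(T:ℝ))) with hηdef
  have hη0 : 0 < η := Real.sqrt_pos.2 (by positivity)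
  have hη2 : η^2 = Δ/(12*(T:ℝ)) := Real.sq_sqrt (by positivity)
  have hηΔ : η ≤ Δ := by
    have h8 : 1 ≤ 8*(Δ*(T:ℝ)) := by rw [hΔT]; linarith
    have h1 : Δ/(12*(T:ℝ)) ≤ Δ^2 := by
      rw [div_le_iff₀ (by positivity)]
      nlinarith
    calc η = Real.sqrt (Δ/(12*(T:ℝ))) := hηdef
      _ ≤ Real.sqrt (Δ^2) := Real.sqrt_le_sqrt h1
      _ = Δ := Real.sqrt_sq hΔ0.le
  have hTη : (T:ℝ) * η^2 ≤ Δ/12 := by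
    rw [hη2, show (T:ℝ) * (Δ/(12*(T:ℝ))) = Δ/12 from by field_simp]
  have hθp0 : (0:ℝ) ≤ 2*Δ+η := by linarith
  have hθp1 : 2*Δ+η ≤ 1 := by linarith
  have hθm0 : (0:ℝ) ≤ 2*Δ-η := by linarith
  have hθm1 : 2*Δ-η ≤ 1 := by linarith
  -- the common accuracy parameter
  set sv : ℝ := Δ * (2*Δ+η) ^ ((1:ℝ)/q) with hsv
  have hθpq0 : (0:ℝ) ≤ (2*Δ+η) ^ ((1:ℝ)/q) := Real.rpow_nonneg hθp0 _
  have hsv0 : 0 ≤ sv := by rw [hsv]; exact mul_nonneg hΔ0.le hθpq0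
  have hb5 : D^(1+(1:ℝ)/q) = D * D^((1:ℝ)/q) := by
    rw [Real.rpow_add hD0, Real.rpow_one]
  have hb6 : D^(1+(1:ℝ)/q) = L/(T:ℝ) := by
    rw [hD, ← Real.rpow_mul hLT0.le,
      show (q/(q+1)) * (1+(1:ℝ)/q) = 1 from by field_simp, Real.rpow_one]
  have hsvle : sv ≤ (3/8) * (L/(T:ℝ)) := by
    have hb1 : (2*Δ+η)^((1:ℝ)/q) ≤ (3*Δ)^((1:ℝ)/q) :=
      Real.rpow_le_rpow hθp0 (by linarith) (by positivity)
    have hb2 : ((3:ℝ)*Δ)^((1:ℝ)/q) = 3^((1:ℝ)/q) * Δ^((1:ℝ)/q) :=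
      Real.mul_rpow (by norm_num) hΔ0.le
    have hb3 : (3:ℝ)^((1:ℝ)/q) ≤ 3 := by
      calc (3:ℝ)^((1:ℝ)/q) ≤ (3:ℝ)^(1:ℝ) :=
            Real.rpow_le_rpow_of_exponent_le (by norm_num)
              (by rw [div_le_one hq0]; linarith)
        _ = 3 := Real.rpow_one 3
    have hb4 : Δ^((1:ℝ)/q) ≤ D^((1:ℝ)/q) :=
      Real.rpow_le_rpow hΔ0.le (by rw [hΔdef]; linarith) (by positivity)
    have h30 : (0:ℝ) ≤ 3^((1:ℝ)/q) := Real.rpow_nonneg (by norm_num) _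
    have hΔq0 : (0:ℝ) ≤ Δ^((1:ℝ)/q) := Real.rpow_nonneg hΔ0.le _
    calc sv = Δ * (2*Δ+η)^((1:ℝ)/q) := hsv
      _ ≤ Δ * (3*Δ)^((1:ℝ)/q) := mul_le_mul_of_nonneg_left hb1 hΔ0.le
      _ = Δ * (3^((1:ℝ)/q) * Δ^((1:ℝ)/q)) := by rw [hb2]
      _ ≤ Δ * (3 * D^((1:ℝ)/q)) := by
          apply mul_le_mul_of_nonneg_left _ hΔ0.le
          exact mul_le_mul hb3 hb4 hΔq0 (by norm_num)
      _ = (3/8) * (D * D^((1:ℝ)/q)) := by rw [hΔdef]; ring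
      _ = (3/8) * (L/(T:ℝ)) := by rw [← hb5, hb6]
  have hsv1 : sv ≤ 1 := by nlinarith [hLT1]
  -- admissibility
  have hsvq : sv^q = Δ^q * (2*Δ+η) := by
    rw [hsv, Real.mul_rpow hΔ0.le hθpq0, ← Real.rpow_mul hθp0,
      show ((1:ℝ)/q)*q = 1 from by field_simp, Real.rpow_one]
  have hΔq0 : (0:ℝ) ≤ Δ^q := Real.rpow_nonneg hΔ0.le q
  have hadm_p : (2*Δ+η) * Δ^q ≤ sv^q := by rw [hsvq]; nlinarith
  have hadm_m : (2*Δ-η) * Δ^q ≤ sv^q := by rw [hsvq]; nlinarith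
  -- the two environments
  set ζp : Fin T → ℝ := fun t => zeta T π Δ sv (2*Δ+η) t with hζp
  set ζm : Fin T → ℝ := fun t => zeta T π Δ sv (2*Δ-η) t with hζm
  -- regret lower bound under τ = θp
  have hRp : ∑ t : Fin T, (1 - ζp t) * (η/2)
      ≤ Regret π (mkEnv T Δ (2*Δ+η) sv hΔ0.le hΔ18 hθp0 hθp1 hsv0 hsv1) := by
    have hor := oracleGain_const T Δ sv (2*Δ+η) hΔ0.le hΔ18 hθp0 hθp1 hsv0 hsv1 (1/2+Δ)
    have hr1 : reward 1 (1/2+Δ) (1/2+Δ) = 1/2-Δ := by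
      unfold reward; rw [if_pos (le_refl _)]; ring
    have hr2 : reward 1 (1/2+Δ) (1/2) = 1/2-Δ := by
      unfold reward; rw [if_pos (by linarith)]; ring
    rw [hr1, hr2] at hor
    have hpb := policyGain_bound T π Δ sv (2*Δ+η) hΔ0 hΔ18 hθp0 hθp1 hsv0 hsv1
    have h2 : ∑ t : Fin T, (1 - ζp t) * (η/2)
        = (T:ℝ)*((2*Δ+η) * (1/2-Δ) + (1-(2*Δ+η)) * (1/2-Δ))
          - ∑ t : Fin T, ((1/2 - Δ - (1-(2*Δ+η))/2) * zeta T π Δ sv (2*Δ+η) t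
              + (1-(2*Δ+η))/2) := by
      rw [show (T:ℝ)*((2*Δ+η) * (1/2-Δ) + (1-(2*Δ+η)) * (1/2-Δ))
          = ∑ _t : Fin T, ((2*Δ+η) * (1/2-Δ) + (1-(2*Δ+η)) * (1/2-Δ)) from by
        rw [Finset.sum_const, Finset.card_univ, Fintype.card_fin, nsmul_eq_mul],
        ← Finset.sum_sub_distrib]
      exact Finset.sum_congr rfl fun t _ => by rw [hζp]; ring
    rw [h2, ← hor]
    calc oracleGain (fun _ => 1/2+Δ) (mkEnv T Δ (2*Δ+η) sv hΔ0.le hΔ18 hθp0 hθp1 hsv0 hsv1)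
          - ∑ t : Fin T, ((1/2 - Δ - (1-(2*Δ+η))/2) * zeta T π Δ sv (2*Δ+η) t
              + (1-(2*Δ+η))/2)
        ≤ oracleGain (fun _ => 1/2+Δ) (mkEnv T Δ (2*Δ+η) sv hΔ0.le hΔ18 hθp0 hθp1 hsv0 hsv1)
          - policyGain π (mkEnv T Δ (2*Δ+η) sv hΔ0.le hΔ18 hθp0 hθp1 hsv0 hsv1) :=
          sub_le_sub_left hpb _
      _ ≤ _ := regret_ge T π Δ sv (2*Δ+η) hΔ0.le hΔ18 hθp0 hθp1 hsv0 hsv1 _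
          (isOracle_const ⟨by linarith, by linarith⟩)
  -- regret lower bound under τ = θm
  have hRm : ∑ t : Fin T, ζm t * (η/2)
      ≤ Regret π (mkEnv T Δ (2*Δ-η) sv hΔ0.le hΔ18 hθm0 hθm1 hsv0 hsv1) := by
    have hor := oracleGain_const T Δ sv (2*Δ-η) hΔ0.le hΔ18 hθm0 hθm1 hsv0 hsv1 (1/2)
    have hr1 : reward 1 (1/2) (1/2+Δ) = 0 := by
      unfold reward; rw [if_neg (by intro h; linarith)]
    have hr2 : reward 1 (1/2) (1/2) = 1/2 := by
      unfold reward; rw [if_pos (le_refl _)]; ring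
    rw [hr1, hr2] at hor
    have hpb := policyGain_bound T π Δ sv (2*Δ-η) hΔ0 hΔ18 hθm0 hθm1 hsv0 hsv1
    have h2 : ∑ t : Fin T, ζm t * (η/2)
        = (T:ℝ)*((2*Δ-η) * 0 + (1-(2*Δ-η)) * (1/2))
          - ∑ t : Fin T, ((1/2 - Δ - (1-(2*Δ-η))/2) * zeta T π Δ sv (2*Δ-η) t
              + (1-(2*Δ-η))/2) := by
      rw [show (T:ℝ)*((2*Δ-η) * 0 + (1-(2*Δ-η)) * (1/2))
          = ∑ _t : Fin T, ((2*Δ-η) * 0 + (1-(2*Δ-η)) * (1/2)) from by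
        rw [Finset.sum_const, Finset.card_univ, Fintype.card_fin, nsmul_eq_mul],
        ← Finset.sum_sub_distrib]
      exact Finset.sum_congr rfl fun t _ => by rw [hζm]; ring
    rw [h2, ← hor]
    calc oracleGain (fun _ => 1/2) (mkEnv T Δ (2*Δ-η) sv hΔ0.le hΔ18 hθm0 hθm1 hsv0 hsv1)
          - ∑ t : Fin T, ((1/2 - Δ - (1-(2*Δ-η))/2) * zeta T π Δ sv (2*Δ-η) t
              + (1-(2*Δ-η))/2)
        ≤ oracleGain (fun _ => 1/2) (mkEnv T Δ (2*Δ-η) sv hΔ0.le hΔ18 hθm0 hθm1 hsv0 hsv1)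
          - policyGain π (mkEnv T Δ (2*Δ-η) sv hΔ0.le hΔ18 hθm0 hθm1 hsv0 hsv1) :=
          sub_le_sub_left hpb _
      _ ≤ _ := regret_ge T π Δ sv (2*Δ-η) hΔ0.le hΔ18 hθm0 hθm1 hsv0 hsv1 _
          (isOracle_const ⟨by norm_num, by norm_num⟩)
  -- the two sums together are large
  have hsum : η*(T:ℝ)/4 ≤ (∑ t : Fin T, (1 - ζp t) * (η/2)) + ∑ t : Fin T, ζm t * (η/2) := by
    rw [← Finset.sum_add_distrib]
    calc η*(T:ℝ)/4 = ∑ _t : Fin T, η/4 := by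
          rw [Finset.sum_const, Finset.card_univ, Fintype.card_fin, nsmul_eq_mul]; ring
      _ ≤ ∑ t : Fin T, ((1 - ζp t) * (η/2) + ζm t * (η/2)) := by
          apply Finset.sum_le_sum
          intro t _
          have hd := zeta_diff T π Δ sv η hΔ0 hΔ18 hη0.le hηΔ hTη t
          rw [hζp, hζm]
          nlinarith [hη0.le, hd]
  -- numeric comparison with the target
  have hnum : (1/100) * Real.sqrt X ≤ η*(T:ℝ)/8 := by
    have h2 : X ≤ (100*(η*(T:ℝ)/8))^2 := by
      have h3 : (100*(η*(T:ℝ)/8))^2 = (625/4)*(η^2*(T:ℝ)^2) := by ring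
      have h4 : η^2*(T:ℝ)^2 = (Δ*(T:ℝ))*(T:ℝ)/(12*(T:ℝ)) := by rw [hη2]; ring
      have h5 : (Δ*(T:ℝ))*(T:ℝ)/(12*(T:ℝ)) = (X/8)*(T:ℝ)/(12*(T:ℝ)) := by rw [hΔT]
      have h6 : (X/8)*(T:ℝ)/(12*(T:ℝ)) = X/96 := by field_simp; ring
      rw [h3, h4, h5, h6]
      linarith
    have hs1 : Real.sqrt X ≤ 100*(η*(T:ℝ)/8) := by
      calc Real.sqrt X ≤ Real.sqrt ((100*(η*(T:ℝ)/8))^2) := Real.sqrt_le_sqrt h2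
        _ = 100*(η*(T:ℝ)/8) := Real.sqrt_sq (by positivity)
    linarith
  -- choose the environment
  by_cases hcase : η*(T:ℝ)/8 ≤ ∑ t : Fin T, (1 - ζp t) * (η/2)
  · refine ⟨mkEnv T Δ (2*Δ+η) sv hΔ0.le hΔ18 hθp0 hθp1 hsv0 hsv1, rfl, ?_, ?_, ?_⟩
    · exact admissible_mkEnv T Δ sv (2*Δ+η) q hΔ0 hΔ18 hθp0 hθp1 hsv0 hsv1 hq0 hadm_p
    · show (∑ _t : Fin T, sv) ≤ L
      rw [Finset.sum_const, Finset.card_univ, Fintype.card_fin, nsmul_eq_mul]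
      calc (T:ℝ) * sv ≤ (T:ℝ) * ((3/8)*(L/(T:ℝ))) :=
            mul_le_mul_of_nonneg_left hsvle (by positivity)
        _ = (3/8)*L := by field_simp
        _ ≤ L := by linarith
    · calc (1/100) * Real.sqrt X ≤ η*(T:ℝ)/8 := hnum
        _ ≤ ∑ t : Fin T, (1 - ζp t) * (η/2) := hcase
        _ ≤ _ := hRp
  · have hcase2 : η*(T:ℝ)/8 ≤ ∑ t : Fin T, ζm t * (η/2) := by
      push_neg at hcase
      linarith
    refine ⟨mkEnv T Δ (2*Δ-η) sv hΔ0.le hΔ18 hθm0 hθm1 hsv0 hsv1, rfl, ?_, ?_, ?_⟩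
    · exact admissible_mkEnv T Δ sv (2*Δ-η) q hΔ0 hΔ18 hθm0 hθm1 hsv0 hsv1 hq0 hadm_m
    · show (∑ _t : Fin T, sv) ≤ L
      rw [Finset.sum_const, Finset.card_univ, Fintype.card_fin, nsmul_eq_mul]
      calc (T:ℝ) * sv ≤ (T:ℝ) * ((3/8)*(L/(T:ℝ))) :=
            mul_le_mul_of_nonneg_left hsvle (by positivity)
        _ = (3/8)*L := by field_simp
        _ ≤ L := by linarith
    · calc (1/100) * Real.sqrt X ≤ η*(T:ℝ)/8 := hnum
        _ ≤ ∑ t : Fin T, ζm t * (η/2) := hcase2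
        _ ≤ _ := hRm
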